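/- arXiv:1802.05750 — 4 statements merged into one kernel-verified Lean document; each statement's English description precedes it below -/
import Mathlib

section
/- Let κ be an uncountable regular cardinal with κ^{<κ}=κ. A κ-union of closed (in X) subsets of a κ-γ-set X ⊆ 2^κ is a κ-γ-set. -/
noncomputable section

open Cardinal Set

namespace GenSp

/-- The index set: a canonical type of order type `κ.ord`. -/
abbrev I (κ : Cardinal.{0}) : Type := κ.ord.ToType

variable (κ : Cardinal.{0}) (A : Type)

/-- The generalized space `A^κ`. -/
abbrev Sp : Type := I κ → A

/-- The basic clopen set `[x ↾ ξ]`: all functions agreeing with `x` below `ξ`. -/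
def cyl (x : Sp κ A) (ξ : I κ) : Set (Sp κ A) := {y | ∀ β < ξ, y β = x β}

/-- The bounded topology on `A^κ`, generated by the basic clopen sets. -/
def bt : TopologicalSpace (Sp κ A) :=
  .generateFrom {S | ∃ x ξ, S = cyl κ A x ξ}

/-- Open in the bounded topology. -/
def OpenK (s : Set (Sp κ A)) : Prop := @IsOpen _ (bt κ A) s

/-- Closed in the bounded topology. -/
def ClosedK (s : Set (Sp κ A)) : Prop := @IsClosed _ (bt κ A) s

/-- Nowhere dense in the bounded topology. -/
def NwdK (s : Set (Sp κ A)) : Prop := @IsNowhereDense _ (bt κ A) s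

/-- κ-meagre: a union of (at most) κ nowhere dense sets. -/
def MeagreK (s : Set (Sp κ A)) : Prop :=
  ∃ f : I κ → Set (Sp κ A), (∀ i, NwdK κ A (f i)) ∧ s = ⋃ i, f i

/-- κ-strongly null set. -/
def SNullK (S : Set (Sp κ A)) : Prop :=
  ∀ ξ : I κ → I κ, ∃ a : I κ → Sp κ A, S ⊆ ⋃ α, cyl κ A (a α) (ξ α)

/-- Coordinatewise addition over `ℤ₂` (translation by `x`). -/
def xadd (x y : Sp κ Bool) : Sp κ Bool := fun i => xor (x i) (y i)

/-- The covering number of the κ-meagre ideal. -/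
def covM : Cardinal :=
  sInf {c | ∃ 𝒜 : Set (Set (Sp κ A)), #𝒜 = c ∧ (∀ s ∈ 𝒜, MeagreK κ A s) ∧ ⋃₀ 𝒜 = Set.univ}

/-- The cofinality of the κ-meagre ideal. -/
def cofM : Cardinal :=
  sInf {c | ∃ 𝒜 : Set (Set (Sp κ A)), #𝒜 = c ∧ (∀ s ∈ 𝒜, MeagreK κ A s) ∧
    ∀ t, MeagreK κ A t → ∃ s ∈ 𝒜, t ⊆ s}

/-- κ is weakly compact: uncountable and with the partition property κ → (κ)²₂. -/
def IsWeaklyCompact (κ : Cardinal.{0}) : Prop :=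
  ℵ₀ < κ ∧ ∀ c : I κ → I κ → Bool, ∃ H : Set (I κ), #H = κ ∧
    ∃ b : Bool, ∀ i ∈ H, ∀ j ∈ H, i < j → c i j = b

/-- `S` is κ-meagre relative to `P` (in the subspace topology). -/
def MeagreInK (P S : Set (Sp κ A)) : Prop :=
  ∃ f : I κ → Set P,
    (∀ i, @IsNowhereDense _ (TopologicalSpace.induced Subtype.val (bt κ A)) (f i)) ∧
    {x : P | (x : Sp κ A) ∈ S} = ⋃ i, f i

/-- Perfect set in the bounded topology. -/
def PerfK (P : Set (Sp κ A)) : Prop := @Perfect _ (bt κ A) P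

/-- Perfectly κ-meagre set. -/
def PMeagreK (S : Set (Sp κ A)) : Prop := ∀ P, PerfK κ A P → MeagreInK κ A P S

/-- κ-λ-set. -/
def KLambdaSet (S : Set (Sp κ A)) : Prop :=
  ∀ B ⊆ S, #B ≤ κ → ∃ G : I κ → Set (Sp κ A),
    (∀ i, OpenK κ A (G i)) ∧ (⋂ i, G i) ∩ S = B

/-- κ-σ-set. -/
def KSigmaSet (S : Set (Sp κ A)) : Prop :=
  ∀ F : I κ → Set (Sp κ A), (∀ i, ClosedK κ A (F i)) →
    ∃ G : I κ → Set (Sp κ A), (∀ i, OpenK κ A (G i)) ∧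
      S ∩ (⋃ i, F i) = S ∩ (⋂ i, G i)

/-- κ-γ-set: every open (proper) κ-cover contains a κ-γ-subcover of size κ. -/
def KGammaSet (X : Set (Sp κ A)) : Prop :=
  ∀ 𝒰 : Set (Set (Sp κ A)), (∀ U ∈ 𝒰, OpenK κ A U) → X ∉ 𝒰 →
    (∀ C ⊆ X, #C < κ → ∃ U ∈ 𝒰, C ⊆ U) →
    ∃ U : I κ → Set (Sp κ A), (∀ α, U α ∈ 𝒰) ∧
      X ⊆ ⋃ α, ⋂ β, ⋂ (_ : α < β), U β

/-- A (proper) open cover of `X` of size κ, indexed by `I κ`. -/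
def IsOCovSeq (X : Set (Sp κ A)) (U : I κ → Set (Sp κ A)) : Prop :=
  (∀ α, OpenK κ A (U α)) ∧ (∀ α, U α ≠ X) ∧ X ⊆ ⋃ α, U α

/-- A (proper) κ-γ-cover of `X`, indexed by `I κ`. -/
def IsGammaCovSeq (X : Set (Sp κ A)) (U : I κ → Set (Sp κ A)) : Prop :=
  (∀ α, OpenK κ A (U α)) ∧ (∀ α, U α ≠ X) ∧
    X ⊆ ⋃ α, ⋂ β, ⋂ (_ : α < β), U β

/-- The cover `U` is essentially of size κ: no subfamily of size `< κ` covers `X`. -/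
def EssK (X : Set (Sp κ A)) (U : I κ → Set (Sp κ A)) : Prop :=
  ∀ s : Set (I κ), #s < κ → ¬ X ⊆ ⋃ β ∈ s, U β

/-- The selection principle `S₁^κ(Γ_κ, Γ_κ)`. -/
def S1GammaGamma (X : Set (Sp κ A)) : Prop :=
  ∀ 𝒰 : I κ → I κ → Set (Sp κ A), (∀ α, IsGammaCovSeq κ A X (𝒰 α)) →
    ∃ f : I κ → I κ, IsGammaCovSeq κ A X (fun α => 𝒰 α (f α))

/-- The κ-Hurewicz property `U^κ_{<κ}(O_κ, Γ_κ)`. -/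
def KHurewicz (X : Set (Sp κ A)) : Prop :=
  ∀ 𝒰 : I κ → I κ → Set (Sp κ A), (∀ α, IsOCovSeq κ A X (𝒰 α)) →
    (∀ α, EssK κ A X (𝒰 α)) →
    ∃ V : I κ → Set (I κ), (∀ α, #(V α) < κ) ∧
      IsGammaCovSeq κ A X (fun α => ⋃ β ∈ V α, 𝒰 α β)

/-- The κ-Menger property `U^κ_{<κ}(O_κ, O_κ)`. -/
def KMenger (X : Set (Sp κ A)) : Prop :=
  ∀ 𝒰 : I κ → I κ → Set (Sp κ A), (∀ α, IsOCovSeq κ A X (𝒰 α)) →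
    (∀ α, EssK κ A X (𝒰 α)) →
    ∃ V : I κ → Set (I κ), (∀ α, #(V α) < κ) ∧
      IsOCovSeq κ A X (fun α => ⋃ β ∈ V α, 𝒰 α β)

/-- The κ-Rothberger property `S₁^κ(O_κ, O_κ)`. -/
def KRothberger (X : Set (Sp κ A)) : Prop :=
  ∀ 𝒰 : I κ → I κ → Set (Sp κ A), (∀ α, IsOCovSeq κ A X (𝒰 α)) →
    ∃ f : I κ → I κ, IsOCovSeq κ A X (fun α => 𝒰 α (f α))

/-- Closed unbounded subset of `I κ`. -/
def IsClubK (S : Set (I κ)) : Prop :=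
  (∀ a : I κ, ∃ b ∈ S, a < b) ∧
  (∀ a : I κ, (∃ b, b < a) → (∀ b < a, ∃ c ∈ S, b < c ∧ c < a) → a ∈ S)

/-- Stationary subset of `I κ`. -/
def IsStatK (S : Set (I κ)) : Prop :=
  ∀ C : Set (I κ), IsClubK κ C → (S ∩ C).Nonempty

/-- The diamond principle `◇_κ(E)`. -/
def DiamondK (E : Set (I κ)) : Prop :=
  ∃ s : I κ → Set (I κ), (∀ α, s α ⊆ Iio α) ∧
    ∀ X : Set (I κ), IsStatK κ {α | α ∈ E ∧ X ∩ Iio α = s α}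

/-- The guessing principle `◇_κ(E, 2^κ, NS_κ)`. -/
def DiamondFunK (E : Set (I κ)) : Prop :=
  ∃ s : I κ → Sp κ Bool,
    ∀ x : Sp κ Bool, IsStatK κ {α | α ∈ E ∧ ∀ β < α, x β = s α β}

/-- `S` is `X`-small. -/
def XSmall (X : Set (I κ)) (S : Set (Sp κ A)) : Prop :=
  ∃ a : I κ → Sp κ A, S ⊆ ⋃ α ∈ X, cyl κ A (a α) α

/-- `S` is small in `A^κ`. -/
def SmallK (S : Set (Sp κ A)) : Prop :=
  ∃ lam : Cardinal, lam < κ ∧ ∀ α : I κ, ∃ T : Set (Sp κ A),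
    #T ≤ lam ∧ S ⊆ ⋃ x ∈ T, cyl κ A x α


section AuxLemmas

variable {κ : Cardinal.{0}} {A : Type}

lemma cyl_self (x : Sp κ A) (ξ : I κ) : x ∈ cyl κ A x ξ := fun _ _ => rfl

lemma cyl_trans {x z : Sp κ A} {ξ : I κ} (hz : z ∈ cyl κ A x ξ) :
    cyl κ A z ξ ⊆ cyl κ A x ξ := fun y hy β hβ => (hy β hβ).trans (hz β hβ)

lemma cyl_mono {x : Sp κ A} {ξ ζ : I κ} (h : ξ ≤ ζ) : cyl κ A x ζ ⊆ cyl κ A x ξ :=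
  fun y hy β hβ => hy β (lt_of_lt_of_le hβ h)

lemma openK_iff [Nonempty (I κ)] {s : Set (Sp κ A)} :
    OpenK κ A s ↔ ∀ z ∈ s, ∃ ξ, cyl κ A z ξ ⊆ s := by
  have fwd : ∀ t : Set (Sp κ A), TopologicalSpace.GenerateOpen {S | ∃ x ξ, S = cyl κ A x ξ} t →
      ∀ z ∈ t, ∃ ξ, cyl κ A z ξ ⊆ t := by
    intro t h
    induction h with
    | basic u hu =>
      obtain ⟨x, ξ, rfl⟩ := hu
      exact fun z hz => ⟨ξ, cyl_trans hz⟩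
    | univ => exact fun z _ => ⟨Classical.arbitrary _, fun _ _ => trivial⟩
    | inter u v _ _ ihu ihv =>
      rintro z ⟨hzu, hzv⟩
      obtain ⟨ξ, hξ⟩ := ihu z hzu
      obtain ⟨η, hη⟩ := ihv z hzv
      exact ⟨max ξ η, fun y hy =>
        ⟨hξ (cyl_mono (le_max_left _ _) hy), hη (cyl_mono (le_max_right _ _) hy)⟩⟩
    | sUnion S _ ih =>
      rintro z ⟨t, ht, hzt⟩
      obtain ⟨ξ, hξ⟩ := ih t ht z hzt
      exact ⟨ξ, fun y hy => ⟨t, ht, hξ hy⟩⟩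
  constructor
  · exact fwd s
  · intro h
    choose ξ hξ using h
    have hs : s = ⋃₀ {t | ∃ z, ∃ hz : z ∈ s, t = cyl κ A z (ξ z hz)} := by
      apply Set.Subset.antisymm
      · intro z hz
        exact ⟨_, ⟨z, hz, rfl⟩, cyl_self z _⟩
      · rintro w ⟨t, ⟨z, hz, rfl⟩, hw⟩
        exact hξ z hz hw
    rw [show OpenK κ A s ↔ TopologicalSpace.GenerateOpen {S | ∃ x ξ, S = cyl κ A x ξ} s from Iff.rfl, hs]
    exact .sUnion _ (by rintro t ⟨z, hz, rfl⟩; exact .basic _ ⟨z, _, rfl⟩)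

lemma bddAboveK (hreg : κ.IsRegular) {ι : Type} (hι : #ι < κ) (f : ι → I κ) :
    ∃ b, ∀ i, f i ≤ b := by
  set e := Ordinal.ToType.mk (o := κ.ord) with he
  have hlt : ∀ i, (e.symm (f i)).1 < κ.ord := fun i => (e.symm (f i)).2
  have hsup : (⨆ i, (e.symm (f i)).1) < κ.ord :=
    Ordinal.iSup_lt_ord (by rwa [hreg.cof_eq]) hlt
  refine ⟨e ⟨_, hsup⟩, fun i => ?_⟩
  have h1 : e.symm (f i) ≤ ⟨_, hsup⟩ := Subtype.coe_le_coe.1 (Ordinal.le_iSup _ i)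
  calc f i = e (e.symm (f i)) := (e.apply_symm_apply _).symm
  _ ≤ e ⟨_, hsup⟩ := e.monotone h1

lemma mk_Iio_ltK (b : I κ) : #(Set.Iio b) < κ := by
  have h := Cardinal.card_typein_toType_lt κ b
  exact lt_of_le_of_lt (le_of_eq rfl) h

lemma mk_Iic_ltK (hk : Cardinal.aleph0 < κ) (b : I κ) : #(Set.Iic b) < κ := by
  have : (Set.Iic b : Set (I κ)) = insert b (Set.Iio b) := by
    rw [Set.Iio_insert]
  rw [this]
  exact lt_of_le_of_lt Cardinal.mk_insert_le
    (Cardinal.add_lt_of_lt hk.le (mk_Iio_ltK b) (lt_trans Cardinal.one_lt_aleph0 hk))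

lemma openK_iInterK [Nonempty (I κ)] (hreg : κ.IsRegular) {ι : Type} (hι : #ι < κ)
    {s : ι → Set (Sp κ A)} (hs : ∀ i, OpenK κ A (s i)) : OpenK κ A (⋂ i, s i) := by
  rw [openK_iff]
  intro z hz
  have h := fun i => (openK_iff.1 (hs i)) z (Set.mem_iInter.1 hz i)
  choose ξ hξ using h
  obtain ⟨b, hb⟩ := bddAboveK hreg hι ξ
  exact ⟨b, fun y hy => Set.mem_iInter.2 fun i => hξ i (cyl_mono (hb i) hy)⟩

lemma openK_diff_singletonK [Nonempty (I κ)] [NoMaxOrder (I κ)] {U : Set (Sp κ A)}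
    (hU : OpenK κ A U) (p : Sp κ A) : OpenK κ A (U \ {p}) := by
  rw [openK_iff] at hU ⊢
  rintro z ⟨hzU, hzp⟩
  obtain ⟨ξ, hξ⟩ := hU z hzU
  obtain ⟨β, hβ⟩ : ∃ β, z β ≠ p β := by
    by_contra h
    push_neg at h
    exact hzp (Set.mem_singleton_iff.2 (funext h))
  obtain ⟨β', hβ'⟩ := exists_gt β
  refine ⟨max ξ β', fun y hy => ⟨hξ (cyl_mono (le_max_left _ _) hy), ?_⟩⟩
  intro hyp
  have h1 : y β = z β := hy β (lt_of_lt_of_le hβ' (le_max_right _ _))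
  rw [Set.mem_singleton_iff.1 hyp] at h1
  exact hβ (h1.symm)

lemma unbounded_of_not_smallK (hk : Cardinal.aleph0 < κ) {S : Set (I κ)}
    (hS : ¬ #S < κ) (γ : I κ) : ∃ η ∈ S, γ < η := by
  by_contra h
  push_neg at h
  exact hS (lt_of_le_of_lt
    (Cardinal.mk_le_mk_of_subset (fun x hx => (h x hx : x ≤ γ))) (mk_Iic_ltK hk γ))

lemma not_mk_Ioi_ltK (hk : Cardinal.aleph0 < κ) (γ : I κ) : ¬ #(Set.Ioi γ) < κ := by
  intro h
  have h1 : #(I κ) = κ := by rw [Cardinal.mk_toType, Cardinal.card_ord]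
  have h2 : κ ≤ #(Set.Iic γ) + #(Set.Ioi γ) := by
    calc κ = #(Set.univ : Set (I κ)) := by rw [Cardinal.mk_univ, h1]
    _ = #((Set.Iic γ ∪ Set.Ioi γ : Set (I κ))) := by rw [Set.Iic_union_Ioi]
    _ ≤ _ := Cardinal.mk_union_le _ _
  exact absurd h2 (not_le.2 (Cardinal.add_lt_of_lt hk.le (mk_Iic_ltK hk γ) h))


lemma openK_unionK {s t : Set (Sp κ A)} (hs : OpenK κ A s) (ht : OpenK κ A t) :
    OpenK κ A (s ∪ t) := @IsOpen.union _ _ _ (bt κ A) hs ht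

end AuxLemmas


theorem stmt12 (κ : Cardinal.{0}) (hk : Cardinal.aleph0 < κ) (hreg : κ.IsRegular) (hpow : κ ^< κ = κ)
    (X : Set (Sp κ Bool)) (hX : KGammaSet κ Bool X)
    (F : I κ → Set (Sp κ Bool))
    (hF : ∀ α, ∃ C, ClosedK κ Bool C ∧ F α = C ∩ X) :
    KGammaSet κ Bool (⋃ α, F α) := by
  classical
  have hne : Nonempty (I κ) := Ordinal.toType_nonempty_iff_ne_zero.2 (by
    intro h
    have : κ = 0 := by rw [← Cardinal.card_ord κ, h, Ordinal.card_zero]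
    rw [this] at hk
    exact absurd hk (by simp))
  have hnomax : NoMaxOrder (I κ) := Cardinal.noMaxOrder hk.le
  choose C hC hFC using hF
  set Y : Set (Sp κ Bool) := ⋃ α, F α with hYdef
  have hYX : Y ⊆ X := Set.iUnion_subset fun α => by rw [hFC α]; exact Set.inter_subset_right
  intro 𝒰 h𝒰open h𝒰X h𝒰cov
  -- increasing families
  set G : I κ → Set (Sp κ Bool) := fun α => ⋃ β ∈ Set.Iic α, F β with hGdef
  set Dc : I κ → Set (Sp κ Bool) := fun α => ⋂ β ∈ Set.Iic α, (C β)ᶜ with hDcdef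
  have hDcOpen : ∀ α, OpenK κ Bool (Dc α) := by
    intro α
    have : Dc α = ⋂ β : (Set.Iic α : Set (I κ)), (C β)ᶜ := by
      rw [hDcdef]; exact Set.biInter_eq_iInter _ _
    rw [this]
    exact openK_iInterK hreg (mk_Iic_ltK hk α) fun β => (hC β).isOpen_compl
  have hGDc : ∀ x α, x ∈ G α → x ∉ Dc α := by
    intro x α hx hxd
    obtain ⟨β, hβ, hxF⟩ := Set.mem_iUnion₂.1 hx
    have hxC : x ∈ C β := by
      have := hxF; rw [hFC β] at this; exact this.1
    exact (Set.mem_iInter₂.1 hxd β hβ) hxC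
  have hXG : ∀ x, x ∈ X → ∀ α, x ∉ Dc α → x ∈ G α := by
    intro x hx α hxd
    rw [hDcdef] at hxd
    simp only [Set.mem_iInter, Set.mem_compl_iff, not_forall, not_not] at hxd
    obtain ⟨β, hβ, hxC⟩ := hxd
    exact Set.mem_iUnion₂.2 ⟨β, hβ, by rw [hFC β]; exact ⟨hxC, hx⟩⟩
  have hGY : ∀ α, G α ⊆ Y := fun α =>
    Set.iUnion₂_subset fun β _ => Set.subset_iUnion F β
  have hlevel : ∀ y ∈ Y, ∃ β₀, ∀ β, β₀ ≤ β → y ∈ G β := by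
    intro y hy
    obtain ⟨a, ha⟩ := Set.mem_iUnion.1 hy
    exact ⟨a, fun β hβ => Set.mem_iUnion₂.2 ⟨a, hβ, ha⟩⟩
  -- tail-membership helper for γ-covers of X
  have tail : ∀ (W : I κ → Set (Sp κ Bool)),
      X ⊆ (⋃ α, ⋂ β, ⋂ (_ : α < β), W β) → ∀ x ∈ X, ∃ ξ₀, ∀ η, ξ₀ < η → x ∈ W η := by
    intro W hW x hx
    obtain ⟨ξ₀, h⟩ := Set.mem_iUnion.1 (hW hx)
    exact ⟨ξ₀, fun η hη => Set.mem_iInter.1 (Set.mem_iInter.1 h η) hη⟩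
  by_cases hcase : ∀ α, ∃ z, z ∈ Y ∧ z ∉ G α
  · -- main case: Y has points of unbounded level
    choose y hyY hyG using hcase
    set 𝒲 : Set (Set (Sp κ Bool)) := {W | ∃ U ∈ 𝒰, ∃ α, W = (U ∪ Dc α) \ {y α}} with h𝒲def
    have h1 : ∀ W ∈ 𝒲, OpenK κ Bool W := by
      rintro W ⟨U, hU, α, rfl⟩
      exact openK_diff_singletonK (openK_unionK (h𝒰open U hU) (hDcOpen α)) _
    have h2 : X ∉ 𝒲 := by
      rintro ⟨U, hU, α, hW⟩
      have hmem : y α ∈ X := hYX (hyY α)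
      rw [hW] at hmem
      exact hmem.2 rfl
    have h3 : ∀ Cs, Cs ⊆ X → #Cs < κ → ∃ W ∈ 𝒲, Cs ⊆ W := by
      intro Cs hCsX hCs
      have hα : ∃ α, y α ∉ Cs := by
        by_contra h
        push_neg at h
        have hg : ∀ c : Cs, ∃ β₀, (c : Sp κ Bool) ∈ Y → ∀ β, β₀ ≤ β → (c : Sp κ Bool) ∈ G β := by
          intro c
          by_cases hc : (c : Sp κ Bool) ∈ Y
          · obtain ⟨β₀, hβ₀⟩ := hlevel _ hc
            exact ⟨β₀, fun _ => hβ₀⟩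
          · exact ⟨Classical.arbitrary _, fun hcc => absurd hcc hc⟩
        choose g hg using hg
        obtain ⟨b, hb⟩ := bddAboveK hreg hCs g
        have : y b ∈ G b := hg ⟨y b, h b⟩ (hyY b) b (hb ⟨y b, h b⟩)
        exact hyG b this
      obtain ⟨α, hα⟩ := hα
      obtain ⟨U, hU, hUsub⟩ := h𝒰cov (Cs ∩ G α)
        (fun c hc => hGY α hc.2) (lt_of_le_of_lt (Cardinal.mk_le_mk_of_subset Set.inter_subset_left) hCs)
      refine ⟨(U ∪ Dc α) \ {y α}, ⟨U, hU, α, rfl⟩, fun c hc => ?_⟩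
      constructor
      · by_cases hcd : c ∈ Dc α
        · exact Or.inr hcd
        · exact Or.inl (hUsub ⟨hc, hXG c (hCsX hc) α hcd⟩)
      · intro hcy
        rw [Set.mem_singleton_iff.1 hcy] at hc
        exact hα hc
    obtain ⟨W, hW𝒲, hWcov⟩ := hX 𝒲 h1 h2 h3
    choose U hU α hWeq using hW𝒲
    have htags : ∀ α₀ γ₀ : I κ, ∃ η, γ₀ < η ∧ α₀ ≤ α η := by
      intro α₀ γ₀
      by_contra h
      push_neg at h
      have hbigfiber : ∃ a, ¬ #{η | γ₀ < η ∧ α η = a} < κ := by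
        by_contra h2
        push_neg at h2
        have hsub : Set.Ioi γ₀ ⊆ ⋃ a : (Set.Iio α₀ : Set (I κ)), {η | γ₀ < η ∧ α η = a} := by
          intro η hη
          exact Set.mem_iUnion.2 ⟨⟨α η, h η hη⟩, hη, rfl⟩
        have hle : #(Set.Ioi γ₀) ≤ #(Set.Iio α₀ : Set (I κ)) *
            ⨆ a : (Set.Iio α₀ : Set (I κ)), #{η | γ₀ < η ∧ α η = (a : I κ)} :=
          le_trans (Cardinal.mk_le_mk_of_subset hsub) (Cardinal.mk_iUnion_le _)
        exact not_mk_Ioi_ltK hk γ₀ (lt_of_le_of_lt hle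
          (Cardinal.mul_lt_of_lt hk.le (mk_Iio_ltK α₀)
            (Cardinal.iSup_lt_of_isRegular hreg (mk_Iio_ltK α₀) fun a => h2 _)))
      obtain ⟨a, hbig⟩ := hbigfiber
      obtain ⟨ξ₁, hξ₁⟩ := tail W hWcov (y a) (hYX (hyY a))
      obtain ⟨η, hηS, hηgt⟩ := unbounded_of_not_smallK hk hbig (max γ₀ ξ₁)
      have hmem := hξ₁ η (lt_of_le_of_lt (le_max_right _ _) hηgt)
      rw [hWeq η] at hmem
      exact hmem.2 (by rw [hηS.2]; exact rfl)
    have hsel : ∀ ζ : I κ, ∃ η, ζ < η ∧ ζ ≤ α η := fun ζ => htags ζ ζ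
    choose e he1 he2 using hsel
    refine ⟨fun ζ => U (e ζ), fun ζ => hU (e ζ), ?_⟩
    intro z hz
    obtain ⟨β₀, hβ₀⟩ := hlevel z hz
    obtain ⟨ξ₀, hξ₀⟩ := tail W hWcov z (hYX hz)
    refine Set.mem_iUnion.2 ⟨max β₀ ξ₀, Set.mem_iInter.2 fun ζ => Set.mem_iInter.2 fun hζ => ?_⟩
    have hmem := hξ₀ (e ζ) (lt_trans (lt_of_le_of_lt (le_max_right _ _) hζ) (he1 ζ))
    rw [hWeq (e ζ)] at hmem
    rcases hmem.1 with h | h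
    · exact h
    · exfalso
      have hzG : z ∈ G (α (e ζ)) :=
        hβ₀ _ (le_trans (le_trans (le_max_left β₀ ξ₀) hζ.le) (he2 ζ))
      exact hGDc z _ hzG h
  · -- degenerate case: Y = G α⋆ for some α⋆
    push_neg at hcase
    obtain ⟨αs, hαs⟩ := hcase
    by_cases hsub : ∃ U ∈ 𝒰, Y ⊆ U
    · obtain ⟨U, hU, hYU⟩ := hsub
      exact ⟨fun _ => U, fun _ => hU, fun z hz => Set.mem_iUnion.2
        ⟨Classical.arbitrary _, Set.mem_iInter.2 fun β => Set.mem_iInter.2 fun _ => hYU hz⟩⟩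
    · push_neg at hsub
      set 𝒲 : Set (Set (Sp κ Bool)) := {W | ∃ U ∈ 𝒰, W = U ∪ Dc αs} with h𝒲def
      have h1 : ∀ W ∈ 𝒲, OpenK κ Bool W := by
        rintro W ⟨U, hU, rfl⟩
        exact openK_unionK (h𝒰open U hU) (hDcOpen αs)
      have h2 : X ∉ 𝒲 := by
        rintro ⟨U, hU, hW⟩
        refine hsub U hU fun z hz => ?_
        have hzX : z ∈ U ∪ Dc αs := by rw [← hW]; exact hYX hz
        rcases hzX with h | h
        · exact h
        · exact absurd h (hGDc z αs (hαs z hz))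
      have h3 : ∀ Cs, Cs ⊆ X → #Cs < κ → ∃ W ∈ 𝒲, Cs ⊆ W := by
        intro Cs hCsX hCs
        obtain ⟨U, hU, hUsub⟩ := h𝒰cov (Cs ∩ G αs)
          (fun c hc => hGY αs hc.2)
          (lt_of_le_of_lt (Cardinal.mk_le_mk_of_subset Set.inter_subset_left) hCs)
        refine ⟨U ∪ Dc αs, ⟨U, hU, rfl⟩, fun c hc => ?_⟩
        by_cases hcd : c ∈ Dc αs
        · exact Or.inr hcd
        · exact Or.inl (hUsub ⟨hc, hXG c (hCsX hc) αs hcd⟩)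
      obtain ⟨W, hW𝒲, hWcov⟩ := hX 𝒲 h1 h2 h3
      choose U hU hWeq using hW𝒲
      refine ⟨fun η => U η, fun η => hU η, ?_⟩
      intro z hz
      obtain ⟨ξ₀, hξ₀⟩ := tail W hWcov z (hYX hz)
      refine Set.mem_iUnion.2 ⟨ξ₀, Set.mem_iInter.2 fun ζ => Set.mem_iInter.2 fun hζ => ?_⟩
      have hmem := hξ₀ ζ hζ
      rw [hWeq ζ] at hmem
      rcases hmem with h | h
      · exact h
      · exact absurd h (hGDc z αs (hαs z hz))



end GenSp
end
end

section
/- Let κ be an uncountable regular cardinal with κ^{<κ}=κ. If X ⊆ 2^κ satisfies the selection principle S_1^κ(Γ_κ, Γ_κ), then X has the κ-Hurewicz property U_{<κ}^κ(O_κ, Γ_κ). -/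
noncomputable section

open Cardinal Set

namespace GenSp

variable (κ : Cardinal.{0}) (A : Type)

theorem stmt13 (κ : Cardinal.{0}) (hk : Cardinal.aleph0 < κ) (hreg : κ.IsRegular) (hpow : κ ^< κ = κ)
    (X : Set (Sp κ Bool)) (hX : S1GammaGamma κ Bool X) :
    KHurewicz κ Bool X := by
  intro 𝒰 hcov hess
  -- For each α, the increasing sequence of initial unions is a κ-γ-cover.
  set 𝒱 : I κ → I κ → Set (Sp κ Bool) := fun α γ => ⋃ β ∈ Iio γ, 𝒰 α β with h𝒱
  have hγ : ∀ α, IsGammaCovSeq κ Bool X (𝒱 α) := by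
    intro α
    refine ⟨?_, ?_, ?_⟩
    · intro γ
      exact @isOpen_iUnion _ _ (bt κ Bool) _ fun β =>
        @isOpen_iUnion _ _ (bt κ Bool) _ fun _ => (hcov α).1 β
    · intro γ h
      exact hess α (Iio γ) (Cardinal.mk_Iio_ord_toType γ) (h ▸ subset_rfl)
    · intro x hx
      obtain ⟨_, ⟨β, rfl⟩, hxβ⟩ := (hcov α).2.2 hx
      refine mem_iUnion.2 ⟨β, ?_⟩
      simp only [mem_iInter]
      intro δ hδ
      exact mem_iUnion₂.2 ⟨β, hδ, hxβ⟩
  obtain ⟨f, hf⟩ := hX 𝒱 hγ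
  exact ⟨fun α => Iio (f α), fun α => Cardinal.mk_Iio_ord_toType (f α), hf⟩

end GenSp
end
end

section
/- Let κ be an uncountable regular cardinal with κ^{<κ}=κ. If A ⊆ 2^κ has the κ-Rothberger property S_1^κ(O_κ, O_κ), then A is κ-strongly null. -/
noncomputable section

open Cardinal Set

namespace GenSp

variable (κ : Cardinal.{0}) (A : Type)

theorem stmt16 (κ : Cardinal.{0}) (hk : Cardinal.aleph0 < κ) (hreg : κ.IsRegular) (hpow : κ ^< κ = κ)
    (S : Set (Sp κ Bool)) (hS : KRothberger κ Bool S) :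
    SNullK κ Bool S := by
  intro ξ
  by_cases hcase : ∃ x : Sp κ Bool, ∃ α, S ⊆ cyl κ Bool x (ξ α)
  · obtain ⟨x, α₀, hx⟩ := hcase
    exact ⟨fun _ => x, hx.trans (Set.subset_iUnion (fun α => cyl κ Bool x (ξ α)) α₀)⟩
  push_neg at hcase
  -- surjections onto restrictions
  have hsurj : ∀ α : I κ, ∃ g : I κ → ({i : I κ // i < ξ α} → Bool), Function.Surjective g := by
    intro α
    have hlt : #({i : I κ // i < ξ α}) < κ := Cardinal.mk_Iio_ord_toType (ξ α)
    have h1 : #({i : I κ // i < ξ α} → Bool) ≤ #(I κ) := by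
      rw [Cardinal.mk_ord_toType]
      calc #({i : I κ // i < ξ α} → Bool) = (2 : Cardinal) ^ #({i : I κ // i < ξ α}) := by
            rw [← Cardinal.power_def, Cardinal.mk_bool]
        _ ≤ κ ^ #({i : I κ // i < ξ α}) :=
            Cardinal.power_le_power_right (le_of_lt (lt_of_le_of_lt ((Cardinal.nat_lt_aleph0 2).le) hk))
        _ ≤ κ ^< κ := Cardinal.le_powerlt κ hlt
        _ = κ := hpow
    obtain ⟨f⟩ := Cardinal.le_def _ _ |>.1 h1
    exact ⟨Function.invFun f, Function.invFun_surjective f.injective⟩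
  choose g hg using hsurj
  set ext : ∀ α : I κ, ({i : I κ // i < ξ α} → Bool) → Sp κ Bool :=
    fun α h i => if hi : i < ξ α then h ⟨i, hi⟩ else false with hext
  set 𝒰 : I κ → I κ → Set (Sp κ Bool) := fun α β => cyl κ Bool (ext α (g α β)) (ξ α) with h𝒰
  have hcov : ∀ α, IsOCovSeq κ Bool S (𝒰 α) := by
    intro α
    refine ⟨fun β => ?_, fun β hβ => ?_, fun y hy => ?_⟩
    · exact TopologicalSpace.isOpen_generateFrom_of_mem ⟨_, _, rfl⟩
    · exact hcase (ext α (g α β)) α (hβ ▸ le_refl _)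
    · obtain ⟨β, hβ⟩ := hg α (fun i => y i.1)
      refine Set.mem_iUnion.2 ⟨β, fun i hi => ?_⟩
      simp only [h𝒰, hext, hβ, dif_pos hi]
  obtain ⟨f, -, -, hf⟩ := hS 𝒰 hcov
  exact ⟨fun α => ext α (g α (f α)), hf⟩


end GenSp
end
end

section
/- Let κ be an uncountable regular cardinal with κ^{<κ}=κ. If ◇_κ(E) holds for E ⊆ κ, then 2^κ is E-small: there exists ⟨a_α⟩_{α∈E} with a_α ∈ 2^κ such that 2^κ = ⋃_{α∈E}[a_α ↾ α]. In particular, under ◇_κ, 2^κ is C-small for every closed unbounded C ⊆ κ. -/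
noncomputable section

open Cardinal Set

namespace GenSp

variable (κ : Cardinal.{0}) (A : Type)

lemma univ_club (κ : Cardinal.{0}) (hk : Cardinal.aleph0 < κ) :
    IsClubK κ Set.univ := by
  constructor
  · intro a
    have hlim : Order.IsSuccLimit κ.ord := Cardinal.isSuccLimit_ord hk.le
    set e := Ordinal.ToType.mk (o := κ.ord)
    set b : Set.Iio κ.ord := ⟨(e.symm a : Ordinal) + 1, by rw [Ordinal.add_one_eq_succ]; exact hlim.succ_lt (Set.mem_Iio.mp (e.symm a).2)⟩ with hb
    refine ⟨e b, trivial, ?_⟩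
    have h1 : e.symm a < b := by
      rw [← Subtype.coe_lt_coe]
      change (e.symm a : Ordinal) < (e.symm a : Ordinal) + 1
      rw [Ordinal.add_one_eq_succ]
      exact Order.lt_succ _
    have h2 := e.lt_iff_lt.mpr h1
    simpa using h2
  · intro _ _ _; trivial

lemma key (κ : Cardinal.{0}) (hk : Cardinal.aleph0 < κ) (E C : Set (I κ))
    (hC : IsClubK κ C) (h : DiamondK κ E) :
    XSmall κ Bool (E ∩ C) Set.univ := by
  classical
  obtain ⟨s, hsub, hstat⟩ := h
  refine ⟨fun α β => decide (β ∈ s α), ?_⟩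
  intro x _
  set X : Set (I κ) := {β | x β = true} with hXdef
  obtain ⟨α, ⟨⟨hαE, hX⟩, hαC⟩⟩ := hstat X C hC
  refine Set.mem_iUnion.2 ⟨α, Set.mem_iUnion.2 ⟨⟨hαE, hαC⟩, ?_⟩⟩
  intro β hβ
  have hiff : β ∈ X ↔ β ∈ s α := by
    rw [← hX]; simp [hβ]
  by_cases hb : β ∈ s α
  · simp only [hb, decide_eq_true_eq]
    exact hiff.mpr hb
  · simp only [hb, decide_eq_false_iff_not]
    have hnx : β ∉ X := fun hm => hb (hiff.mp hm)
    exact Bool.eq_false_iff.mpr (fun ht => hnx ht)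

theorem stmt18 (κ : Cardinal.{0}) (hk : Cardinal.aleph0 < κ) (hreg : κ.IsRegular) (hpow : κ ^< κ = κ) :
    (∀ E : Set (I κ), DiamondK κ E → XSmall κ Bool E Set.univ) ∧
    (DiamondK κ Set.univ → ∀ C, IsClubK κ C → XSmall κ Bool C Set.univ) := by
  constructor
  · intro E hE
    have := key κ hk E Set.univ (univ_club κ hk) hE
    simpa using this
  · intro hD C hC
    have := key κ hk Set.univ C hC hD
    simpa using this

end GenSp
end
end
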